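/- Every finitely generated unconfined Steiner triple system is a free Steiner quasigroup. -/
import Mathlib


/-- A Steiner quasigroup: a commutative, idempotent binary structure
with `x * (x * y) = y`. -/
class Steiner (M : Type) extends Mul M where
  comm : ∀ x y : M, x * y = y * x
  idem : ∀ x : M, x * x = x
  lcancel : ∀ x y : M, x * (x * y) = y

namespace Steiner

variable {M : Type} [Steiner M]

/-- Membership in the subquasigroup generated by `A`. -/
inductive mem_closure (A : Set M) : M → Prop
  | base {a : M} : a ∈ A → mem_closure A a
  | mul {a b : M} : mem_closure A a → mem_closure A b → mem_closure A (a * b)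

/-- The subquasigroup generated by `A`. -/
def closure (A : Set M) : Set M := {x | mem_closure A x}

instance (A : Set M) : Steiner (closure A) where
  mul a b := ⟨a.1 * b.1, a.2.mul b.2⟩
  comm a b := Subtype.ext (Steiner.comm a.1 b.1)
  idem a := Subtype.ext (Steiner.idem a.1)
  lcancel a b := Subtype.ext (Steiner.lcancel a.1 b.1)

/-- `A` is independent: the generated subquasigroup has the universal mapping
property over `A` with respect to the class of Steiner quasigroups. -/
def Independent (A : Set M) : Prop :=
  ∀ (N : Type) [Steiner N] (f : A → N),
    ∃ g : closure A →ₙ* N, ∀ a : A, g ⟨a.1, mem_closure.base a.2⟩ = f a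

/-- A tuple is independent if its entries are pairwise distinct and its
range is an independent set. -/
def IndepTuple {ι : Type} (a : ι → M) : Prop :=
  Function.Injective a ∧ Independent (Set.range a)

/-- `A` is a free base of `M`: it generates `M` and `M` has the universal
mapping property over `A`. -/
def FreeBase (A : Set M) : Prop :=
  closure A = Set.univ ∧
  ∀ (N : Type) [Steiner N] (f : A → N),
    ∃ g : M →ₙ* N, ∀ a : A, g a.1 = f a

/-- Terms in the language with one binary operation. -/
inductive Term (α : Type) where
  | var : α → Term α
  | mul : Term α → Term α → Term α

/-- Evaluation of a term at an assignment. -/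
def Term.eval {α : Type} (e : α → M) : Term α → M
  | .var x => e x
  | .mul t s => t.eval e * s.eval e

/-- Equivalence of terms generated by applications of commutativity to subterms. -/
inductive TEquiv {α : Type} : Term α → Term α → Prop
  | refl (t : Term α) : TEquiv t t
  | symm {t s : Term α} : TEquiv t s → TEquiv s t
  | trans {t s u : Term α} : TEquiv t s → TEquiv s u → TEquiv t u
  | comm (t s : Term α) : TEquiv (.mul t s) (.mul s t)
  | congr {t t' s s' : Term α} : TEquiv t t' → TEquiv s s' →
      TEquiv (.mul t s) (.mul t' s')

/-- The subterm relation. -/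
inductive Subterm {α : Type} : Term α → Term α → Prop
  | refl (t : Term α) : Subterm t t
  | left {s t r : Term α} : Subterm s t → Subterm s (.mul t r)
  | right {s t r : Term α} : Subterm s t → Subterm s (.mul r t)

/-- A term is reduced if it contains no subterm of the forms `t₁·t₂` with
`t₁ ∼ t₂`, `t₁·(t₂·t₃)` with `t₁ ∼ t₂` or `t₁ ∼ t₃`, or `(t₁·t₂)·t₃` with
`t₁ ∼ t₃` or `t₂ ∼ t₃`. -/
def Reduced {α : Type} (t : Term α) : Prop :=
  (∀ t1 t2 : Term α, Subterm (.mul t1 t2) t → ¬ TEquiv t1 t2) ∧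
  (∀ t1 t2 t3 : Term α, Subterm (.mul t1 (.mul t2 t3)) t →
      ¬ TEquiv t1 t2 ∧ ¬ TEquiv t1 t3) ∧
  (∀ t1 t2 t3 : Term α, Subterm (.mul (.mul t1 t2) t3) t →
      ¬ TEquiv t1 t3 ∧ ¬ TEquiv t2 t3)

/-- The rank of a term. -/
def Term.rank {α : Type} : Term α → ℕ
  | .var _ => 0
  | .mul t s => max t.rank s.rank + 1

/-- Number of occurrences of a variable in a term. -/
def Term.occ {α : Type} [DecidableEq α] (x : α) : Term α → ℕ
  | .var y => if y = x then 1 else 0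
  | .mul t s => t.occ x + s.occ x

/-- The variable `x` occurs in the term. -/
inductive Occurs {α : Type} (x : α) : Term α → Prop
  | var : Occurs x (.var x)
  | left {t s : Term α} : Occurs x t → Occurs x (.mul t s)
  | right {t s : Term α} : Occurs x s → Occurs x (.mul t s)

/-- The levels of `M` over `A`. -/
def level (A : Set M) : ℕ → Set M
  | 0 => A
  | n + 1 => {z | ∃ a ∈ level A n, ∃ b ∈ level A n, z = a * b}

/-- `S` is a standard free construction over `A`. -/
def StdFree (A : Set M) (S : ℕ → Set M) : Prop :=
  S 0 = A ∧
  (∀ n, S (n + 1) = {z | ∃ a ∈ S n, ∃ b ∈ S n, z = a * b}) ∧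
  (∀ a ∈ S 0, ∀ b ∈ S 0, a ≠ b → a * b ∉ S 0) ∧
  (∀ n, ∀ a ∈ S (n + 1), a ∉ S n → ∀ b ∈ S (n + 1), b ∉ S n → a ≠ b →
    a * b ∉ S (n + 1)) ∧
  (∀ n, ∀ a ∈ S (n + 1), a ∉ S n → ∃ b ∈ S n, ∃ c ∈ S n, b ≠ c ∧ a = b * c ∧
    ∀ b' ∈ S n, ∀ c' ∈ S n, b' ≠ c' → a = b' * c' → ({b', c'} : Set M) = {b, c})

theorem eval_mem_closure {α : Type} {A : Set M} (e : α → M) (h : ∀ x, e x ∈ A) :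
    ∀ t : Term α, t.eval e ∈ closure A
  | .var x => mem_closure.base (h x)
  | .mul t s => mem_closure.mul (eval_mem_closure e h t) (eval_mem_closure e h s)

end Steiner

namespace SA
open Steiner
variable {M : Type} [Steiner M]

theorem mulr (x y : M) : (x * y) * y = x := by
  rw [Steiner.comm (x*y) y, Steiner.comm x y, Steiner.lcancel]

theorem eq_of_mul_eq_left {x y : M} (h : x * y = x) : y = x := by
  have h2 := Steiner.lcancel x y
  rw [h] at h2
  rw [← h2, Steiner.idem]

theorem eq_of_mul_eq_right {x y : M} (h : x * y = y) : x = y := by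
  have h2 : (x*y)*y = x := mulr x y
  rw [h, Steiner.idem] at h2
  exact h2.symm

theorem mul_ne_left {x y : M} (h : x ≠ y) : x * y ≠ x :=
  fun hc => h (eq_of_mul_eq_left hc).symm

theorem mul_ne_right {x y : M} (h : x ≠ y) : x * y ≠ y :=
  fun hc => h (eq_of_mul_eq_right hc)

theorem closure_mono {S T : Set M} (h : S ⊆ T) : closure S ⊆ closure T := by
  intro x hx
  induction hx with
  | base ha => exact mem_closure.base (h ha)
  | mul _ _ iha ihb => exact mem_closure.mul iha ihb

theorem closure_le {S T : Set M} (h : S ⊆ closure T) : closure S ⊆ closure T := by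
  intro x hx
  induction hx with
  | base ha => exact h ha
  | mul _ _ iha ihb => exact mem_closure.mul iha ihb

open Classical in
noncomputable def FS (B : Finset M) : ℕ → Finset M
  | 0 => B
  | n+1 => ((FS B n) ×ˢ (FS B n)).image (fun p => p.1 * p.2)

theorem mem_FS_succ {B : Finset M} {n : ℕ} {z : M} :
    z ∈ FS B (n+1) ↔ ∃ p ∈ FS B n, ∃ q ∈ FS B n, z = p * q := by
  classical
  rw [FS]
  constructor
  · intro hz
    rcases Finset.mem_image.1 hz with ⟨p, hp, hpe⟩
    rcases Finset.mem_product.1 hp with ⟨h1, h2⟩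
    exact ⟨p.1, h1, p.2, h2, hpe.symm⟩
  · rintro ⟨p, hp, q, hq, rfl⟩
    exact Finset.mem_image.2 ⟨(p,q), Finset.mem_product.2 ⟨hp,hq⟩, rfl⟩

theorem FS_succ_self {B : Finset M} {n : ℕ} {x : M} (hx : x ∈ FS B n) : x ∈ FS B (n+1) :=
  mem_FS_succ.2 ⟨x, hx, x, hx, (Steiner.idem x).symm⟩

theorem FS_mono {B : Finset M} {m n : ℕ} (h : m ≤ n) : FS B m ⊆ FS B n := by
  induction n, h using Nat.le_induction with
  | base => exact fun _ h => h
  | succ n _ ih => exact fun x hx => FS_succ_self (ih hx)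

theorem exists_FS {B : Finset M} (hg : closure (↑B : Set M) = Set.univ) (x : M) :
    ∃ n, x ∈ FS B n := by
  have hx : x ∈ closure (↑B : Set M) := hg ▸ Set.mem_univ x
  induction hx with
  | base ha => exact ⟨0, ha⟩
  | mul _ _ iha ihb =>
    rcases iha with ⟨m, hm⟩; rcases ihb with ⟨k, hk⟩
    exact ⟨max m k + 1, mem_FS_succ.2 ⟨_, FS_mono (le_max_left m k) hm, _,
      FS_mono (le_max_right m k) hk, rfl⟩⟩

theorem FS_empty : ∀ n, FS (∅ : Finset M) n = ∅
  | 0 => rfl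
  | n+1 => by
    ext z
    simp only [Finset.notMem_empty, iff_false]
    intro hz
    rcases mem_FS_succ.1 hz with ⟨p, hp, _, _, _⟩
    rw [FS_empty n] at hp
    exact Finset.notMem_empty _ hp

omit [Steiner M] in
theorem pair_cases {a b c d : M} (h : ({a, b} : Set M) = {c, d}) (hab : a ≠ b) :
    (a = c ∧ b = d) ∨ (a = d ∧ b = c) := by
  have ha : a = c ∨ a = d := by
    have h2 : a ∈ ({c, d} : Set M) := h ▸ (by simp : a ∈ ({a,b} : Set M))
    simpa using h2
  have hb : b = c ∨ b = d := by
    have h2 : b ∈ ({c, d} : Set M) := h ▸ (by simp : b ∈ ({a,b} : Set M))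
    simpa using h2
  have hc : c = a ∨ c = b := by
    have h2 : c ∈ ({a, b} : Set M) := h.symm ▸ (by simp : c ∈ ({c,d} : Set M))
    simpa using h2
  by_cases h1 : a = c
  · refine Or.inl ⟨h1, ?_⟩
    rcases hb with h2 | h2
    · exact absurd (h1.trans h2.symm) hab
    · exact h2
  · rcases ha with h2 | h2
    · exact absurd h2 h1
    refine Or.inr ⟨h2, ?_⟩
    rcases hc with h3 | h3
    · exact absurd h3.symm h1
    · exact h3.symm

/-- The unconfinedness hypothesis. -/
def Uncf (M : Type) [Steiner M] : Prop :=
  ∀ A' : Finset M, A'.Nonempty → ∃ a ∈ A',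
      ∀ b c b' c' : M, b ∈ A' → c ∈ A' → b' ∈ A' → c' ∈ A' →
        b ≠ c → a = b * c → b' ≠ c' → a = b' * c' →
        ({b, c} : Set M) = {b', c'}

open Classical in
noncomputable def blocks (X : Finset M) : Finset (Finset M) :=
  X.powerset.filter (fun s => ∃ p ∈ X, ∃ q ∈ X, p ≠ q ∧ p * q ∈ X ∧ s = {p, q, p * q})

open Classical in
theorem mem_blocks {X : Finset M} {s : Finset M} :
    s ∈ blocks X ↔ ∃ p ∈ X, ∃ q ∈ X, p ≠ q ∧ p * q ∈ X ∧ s = {p, q, p * q} := by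
  classical
  constructor
  · intro h; exact (Finset.mem_filter.1 h).2
  · intro h
    refine Finset.mem_filter.2 ⟨Finset.mem_powerset.2 ?_, h⟩
    rcases h with ⟨p, hp, q, hq, _, hpq, rfl⟩
    intro x hx
    simp only [Finset.mem_insert, Finset.mem_singleton] at hx
    rcases hx with rfl | rfl | rfl <;> assumption

open Classical in
theorem blocks_empty : blocks (∅ : Finset M) = ∅ := by
  ext s
  simp only [Finset.notMem_empty, iff_false]
  intro h
  rcases mem_blocks.1 h with ⟨p, hp, _⟩
  exact Finset.notMem_empty _ hp

open Classical in
theorem block_rep {X : Finset M} {s : Finset M} (hs : s ∈ blocks X) {a : M} (ha : a ∈ s) :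
    ∃ b ∈ X, ∃ c ∈ X, b ≠ c ∧ a = b * c ∧ s = {a, b, c} := by
  classical
  rcases mem_blocks.1 hs with ⟨p, hp, q, hq, hne, hpq, rfl⟩
  have hmem : a = p ∨ a = q ∨ a = p * q := by simpa using ha
  rcases hmem with h | h | h
  · refine ⟨q, hq, p * q, hpq, (mul_ne_right hne).symm, ?_, ?_⟩
    · rw [h]
      exact (by rw [Steiner.comm p q, Steiner.lcancel] : q * (p * q) = p).symm
    · rw [h]
  · refine ⟨p, hp, p * q, hpq, (mul_ne_left hne).symm, ?_, ?_⟩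
    · rw [h]; exact (Steiner.lcancel p q).symm
    · rw [h]; ext x; simp only [Finset.mem_insert, Finset.mem_singleton]; tauto
  · refine ⟨p, hp, q, hq, hne, h, ?_⟩
    rw [h]; ext x; simp only [Finset.mem_insert, Finset.mem_singleton]; tauto

open Classical in
theorem blocks_erase {X : Finset M} {a : M} :
    blocks (X.erase a) = (blocks X).filter (fun s => a ∉ s) := by
  classical
  ext s
  simp only [Finset.mem_filter, mem_blocks]
  constructor
  · rintro ⟨p, hp, q, hq, hne, hpq, rfl⟩
    refine ⟨⟨p, Finset.mem_of_mem_erase hp, q, Finset.mem_of_mem_erase hq, hne,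
      Finset.mem_of_mem_erase hpq, rfl⟩, ?_⟩
    intro hmem
    simp only [Finset.mem_insert, Finset.mem_singleton] at hmem
    rcases hmem with rfl | rfl | rfl
    · exact (Finset.mem_erase.1 hp).1 rfl
    · exact (Finset.mem_erase.1 hq).1 rfl
    · exact (Finset.mem_erase.1 hpq).1 rfl
  · rintro ⟨⟨p, hp, q, hq, hne, hpq, rfl⟩, hnmem⟩
    simp only [Finset.mem_insert, Finset.mem_singleton, not_or] at hnmem
    exact ⟨p, Finset.mem_erase.2 ⟨fun h => hnmem.1 h.symm, hp⟩,
      q, Finset.mem_erase.2 ⟨fun h => hnmem.2.1 h.symm, hq⟩, hne,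
      Finset.mem_erase.2 ⟨fun h => hnmem.2.2 h.symm, hpq⟩, rfl⟩

open Classical in
theorem peel (huncf : Uncf M) (X : Finset M) :
    ∃ Y : Finset M, Y ⊆ X ∧ Y.card + (blocks X).card ≤ X.card ∧
      closure (↑Y : Set M) = closure (↑X : Set M) := by
  classical
  induction X using Finset.strongInduction with
  | _ X ih =>
  rcases X.eq_empty_or_nonempty with rfl | hne
  · exact ⟨∅, Finset.Subset.refl _, by simp [blocks_empty], rfl⟩
  obtain ⟨a, haX, hauniq⟩ := huncf X hne
  set X' := X.erase a with hX'
  have hssub : X' ⊂ X := Finset.erase_ssubset haX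
  have hcard : X'.card + 1 = X.card := Finset.card_erase_add_one haX
  -- the blocks of X containing a
  have hXsplit : ((blocks X).filter (fun s => a ∈ s)).card +
      ((blocks X).filter (fun s => a ∉ s)).card = (blocks X).card :=
    Finset.card_filter_add_card_filter_not _
  have hX'blocks : (blocks X').card = ((blocks X).filter (fun s => a ∉ s)).card := by
    rw [hX', blocks_erase]
  by_cases hrep : ∃ b ∈ X, ∃ c ∈ X, b ≠ c ∧ a = b * c
  · -- a lies on at least one block; at most one by unconfinedness
    obtain ⟨b, hb, c, hc, hbc, habc⟩ := hrep
    have hba : b ≠ a := by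
      rintro rfl
      exact hbc (eq_of_mul_eq_left habc.symm).symm
    have hca : c ≠ a := by
      rintro rfl
      rw [Steiner.comm] at habc
      exact hbc (eq_of_mul_eq_left habc.symm)
    have hle1 : ((blocks X).filter (fun s => a ∈ s)).card ≤ 1 := by
      refine Finset.card_le_one.2 ?_
      intro s hs t ht
      rcases Finset.mem_filter.1 hs with ⟨hs1, hs2⟩
      rcases Finset.mem_filter.1 ht with ⟨ht1, ht2⟩
      rcases block_rep hs1 hs2 with ⟨b1, hb1, c1, hc1, hbc1, hab1, hsE⟩
      rcases block_rep ht1 ht2 with ⟨b2, hb2, c2, hc2, hbc2, hab2, htE⟩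
      have hset := hauniq b1 c1 b2 c2 hb1 hc1 hb2 hc2 hbc1 hab1 hbc2 hab2
      rcases pair_cases hset hbc1 with ⟨h1, h2⟩ | ⟨h1, h2⟩
      · rw [hsE, htE, h1, h2]
      · rw [hsE, htE, h1, h2]
        ext x; simp only [Finset.mem_insert, Finset.mem_singleton]; tauto
    have hblX : (blocks X).card ≤ (blocks X').card + 1 := by omega
    have hbX' : b ∈ X' := Finset.mem_erase.2 ⟨hba, hb⟩
    have hcX' : c ∈ X' := Finset.mem_erase.2 ⟨hca, hc⟩
    have hcl : closure (↑X' : Set M) = closure (↑X : Set M) := by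
      refine Set.Subset.antisymm (closure_mono ?_) (closure_le ?_)
      · exact_mod_cast Finset.erase_subset a X
      · intro x hx
        rcases eq_or_ne x a with rfl | hxa
        · rw [habc]
          exact mem_closure.mul (mem_closure.base hbX') (mem_closure.base hcX')
        · exact mem_closure.base (Finset.mem_coe.2 (Finset.mem_erase.2 ⟨hxa, hx⟩))
    obtain ⟨Y, hYX', hYcard, hYcl⟩ := ih X' hssub
    exact ⟨Y, hYX'.trans (Finset.erase_subset a X), by omega, hYcl.trans hcl⟩
  · -- a lies on no block of X
    have hnob : ((blocks X).filter (fun s => a ∈ s)).card = 0 := by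
      rw [Finset.card_eq_zero]
      ext s
      simp only [Finset.mem_filter, Finset.notMem_empty, iff_false, not_and]
      intro hs hmem
      rcases block_rep hs hmem with ⟨b1, hb1, c1, hc1, hbc1, hab1, _⟩
      exact hrep ⟨b1, hb1, c1, hc1, hbc1, hab1⟩
    obtain ⟨Y', hY'X', hY'card, hY'cl⟩ := ih X' hssub
    refine ⟨insert a Y', ?_, ?_, ?_⟩
    · intro x hx
      rcases Finset.mem_insert.1 hx with rfl | hx'
      · exact haX
      · exact Finset.erase_subset a X (hY'X' hx')
    · have := Finset.card_insert_le a Y'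
      omega
    · refine Set.Subset.antisymm (closure_le ?_) (closure_le ?_)
      · intro x hx
        rcases Finset.mem_insert.1 (Finset.mem_coe.1 hx) with rfl | hx'
        · exact mem_closure.base (Finset.mem_coe.2 haX)
        · have h1 : x ∈ closure (↑Y' : Set M) := mem_closure.base (Finset.mem_coe.2 hx')
          rw [hY'cl] at h1
          exact closure_mono (by exact_mod_cast Finset.erase_subset a X) h1
      · intro x hx
        by_cases hxa : x = a
        · rw [hxa]
          exact mem_closure.base (Finset.mem_coe.2 (Finset.mem_insert_self a Y'))
        · have hx' : x ∈ closure (↑Y' : Set M) := by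
            rw [hY'cl]
            exact mem_closure.base (Finset.mem_coe.2 (Finset.mem_erase.2 ⟨hxa, Finset.mem_coe.1 hx⟩))
          exact closure_mono (by exact_mod_cast Finset.subset_insert a Y') hx'

section Heights
variable (B : Finset M) (hg : ∀ x : M, ∃ n, x ∈ FS B n)

open Classical in
noncomputable def hgt (x : M) : ℕ := Nat.find (hg x)

theorem mem_FS_hgt (x : M) : x ∈ FS B (hgt B hg x) := by
  classical
  exact Nat.find_spec (hg x)

theorem hgt_le {x : M} {n : ℕ} (h : x ∈ FS B n) : hgt B hg x ≤ n := by
  classical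
  exact Nat.find_le h

theorem notMem_FS_lt {x : M} {n : ℕ} (h : n < hgt B hg x) : x ∉ FS B n := by
  classical
  exact Nat.find_min (hg x) h

theorem hgt_eq_zero {x : M} (h : x ∈ B) : hgt B hg x = 0 :=
  Nat.le_zero.1 (hgt_le B hg (h : x ∈ FS B 0))

theorem hgt_pos {x : M} (h : x ∉ B) : 1 ≤ hgt B hg x := by
  rcases Nat.eq_zero_or_pos (hgt B hg x) with h0 | h1
  · exact absurd (h0 ▸ mem_FS_hgt B hg x : x ∈ FS B 0) h
  · exact h1

open Classical in
noncomputable def repP (x : M) : M × M :=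
  if h : ∃ p, p ∈ FS B (hgt B hg x - 1) ∧ ∃ q, q ∈ FS B (hgt B hg x - 1) ∧ p ≠ q ∧ x = p * q
  then (h.choose, h.choose_spec.2.choose) else (x, x)

theorem repP_spec {x : M} (hx : 1 ≤ hgt B hg x) :
    (repP B hg x).1 ∈ FS B (hgt B hg x - 1) ∧ (repP B hg x).2 ∈ FS B (hgt B hg x - 1) ∧
    (repP B hg x).1 ≠ (repP B hg x).2 ∧ x = (repP B hg x).1 * (repP B hg x).2 := by
  classical
  obtain ⟨m, hm⟩ : ∃ m, hgt B hg x = m + 1 := ⟨hgt B hg x - 1, by omega⟩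
  have hxm : x ∈ FS B (m+1) := hm ▸ mem_FS_hgt B hg x
  rcases mem_FS_succ.1 hxm with ⟨p, hp, q, hq, hpq⟩
  have hpq' : p ≠ q := by
    rintro rfl
    rw [Steiner.idem] at hpq
    exact notMem_FS_lt B hg (by omega : m < hgt B hg x) (hpq ▸ hp)
  have hex : ∃ p, p ∈ FS B (hgt B hg x - 1) ∧ ∃ q, q ∈ FS B (hgt B hg x - 1) ∧ p ≠ q ∧ x = p * q := by
    rw [hm]
    exact ⟨p, by simpa using hp, q, by simpa using hq, hpq', hpq⟩
  rw [repP, dif_pos hex]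
  exact ⟨hex.choose_spec.1, hex.choose_spec.2.choose_spec.1,
    hex.choose_spec.2.choose_spec.2.1, hex.choose_spec.2.choose_spec.2.2⟩

theorem hgt_repP_lt {x : M} (hx : 1 ≤ hgt B hg x) :
    hgt B hg (repP B hg x).1 < hgt B hg x ∧ hgt B hg (repP B hg x).2 < hgt B hg x := by
  obtain ⟨h1, h2, _, _⟩ := repP_spec B hg hx
  constructor
  · have := hgt_le B hg h1; omega
  · have := hgt_le B hg h2; omega

open Classical in
noncomputable def psiB (x : M) : Finset M := {(repP B hg x).1, (repP B hg x).2, x}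

open Classical in
theorem mem_psiB {x u : M} :
    u ∈ psiB B hg x ↔ u = (repP B hg x).1 ∨ u = (repP B hg x).2 ∨ u = x := by
  simp [psiB]

open Classical in
theorem card_bound {X : Finset M} (hBX : B ⊆ X)
    (hcl : ∀ w ∈ X, 1 ≤ hgt B hg w → (repP B hg w).1 ∈ X ∧ (repP B hg w).2 ∈ X)
    (γ : Finset M) (hγ : γ ∈ blocks X)
    (hγψ : ∀ w ∈ X, 1 ≤ hgt B hg w → γ ≠ psiB B hg w) :
    (X \ B).card + 1 ≤ (blocks X).card := by
  classical
  have hpos : ∀ w ∈ X \ B, 1 ≤ hgt B hg w := by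
    intro w hw
    exact hgt_pos B hg (Finset.mem_sdiff.1 hw).2
  have hψblock : ∀ w ∈ X \ B, psiB B hg w ∈ blocks X := by
    intro w hw
    have hw1 := hpos w hw
    have hwX := (Finset.mem_sdiff.1 hw).1
    obtain ⟨hp, hq, hne, heq⟩ := repP_spec B hg hw1
    obtain ⟨hpX, hqX⟩ := hcl w hwX hw1
    refine mem_blocks.2 ⟨(repP B hg w).1, hpX, (repP B hg w).2, hqX, hne, ?_, ?_⟩
    · rw [← heq]; exact hwX
    · rw [psiB, ← heq]
  have hψinj : ∀ v ∈ X \ B, ∀ w ∈ X \ B, psiB B hg v = psiB B hg w → v = w := by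
    intro v hv w hw hvw
    by_contra hne
    have hv1 := hpos v hv
    have hw1 := hpos w hw
    have hvmem : v ∈ psiB B hg w := hvw ▸ (mem_psiB B hg).2 (Or.inr (Or.inr rfl))
    have hwmem : w ∈ psiB B hg v := hvw ▸ (mem_psiB B hg).2 (Or.inr (Or.inr rfl))
    have hlt := hgt_repP_lt B hg hv1
    have hlt' := hgt_repP_lt B hg hw1
    have hvlt : hgt B hg v < hgt B hg w := by
      rcases (mem_psiB B hg).1 hvmem with h | h | h
      · rw [h]; exact hlt'.1
      · rw [h]; exact hlt'.2
      · exact absurd h hne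
    have hwlt : hgt B hg w < hgt B hg v := by
      rcases (mem_psiB B hg).1 hwmem with h | h | h
      · rw [h]; exact hlt.1
      · rw [h]; exact hlt.2
      · exact absurd h.symm hne
    omega
  have hγnot : γ ∉ (X \ B).attach.image (fun w => psiB B hg w.1) := by
    intro hmem
    rcases Finset.mem_image.1 hmem with ⟨w, _, hweq⟩
    exact hγψ w.1 (Finset.mem_sdiff.1 w.2).1 (hpos w.1 w.2) hweq.symm
  have hsub : insert γ ((X \ B).attach.image (fun w => psiB B hg w.1)) ⊆ blocks X := by
    intro s hs
    rcases Finset.mem_insert.1 hs with rfl | hs'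
    · exact hγ
    · rcases Finset.mem_image.1 hs' with ⟨w, _, hweq⟩
      exact hweq ▸ hψblock w.1 w.2
  have hcardim : ((X \ B).attach.image (fun w => psiB B hg w.1)).card = (X \ B).card := by
    rw [Finset.card_image_of_injOn, Finset.card_attach]
    intro v _ w _ hvw
    exact Subtype.ext (hψinj v.1 v.2 w.1 w.2 hvw)
  calc (X \ B).card + 1 = (insert γ ((X \ B).attach.image (fun w => psiB B hg w.1))).card := by
        rw [Finset.card_insert_of_notMem hγnot, hcardim]
      _ ≤ (blocks X).card := Finset.card_le_card hsub

theorem bad_absurd (huncf : Uncf M)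
    (hgenB : closure (↑B : Set M) = Set.univ)
    (hmin : ∀ Y : Finset M, closure (↑Y : Set M) = Set.univ → B.card ≤ Y.card)
    {X : Finset M} (hBX : B ⊆ X)
    (hcl : ∀ w ∈ X, 1 ≤ hgt B hg w → (repP B hg w).1 ∈ X ∧ (repP B hg w).2 ∈ X)
    (γ : Finset M) (hγ : γ ∈ blocks X)
    (hγψ : ∀ w ∈ X, 1 ≤ hgt B hg w → γ ≠ psiB B hg w) : False := by
  classical
  obtain ⟨Y, hYX, hYcard, hYcl⟩ := peel huncf X
  have h1 := card_bound B hg hBX hcl γ hγ hγψ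
  have hXgen : closure (↑X : Set M) = Set.univ := by
    apply Set.eq_univ_of_univ_subset
    rw [← hgenB]
    exact closure_mono (by exact_mod_cast hBX)
  have h2 := hmin Y (hYcl.trans hXgen)
  have h3 : (X ∩ B).card + (X \ B).card = X.card := Finset.card_inter_add_card_sdiff X B
  have h4 : (X ∩ B).card ≤ B.card := Finset.card_le_card Finset.inter_subset_right
  omega

theorem FS_rep_closed (n : ℕ) :
    ∀ w ∈ FS B (n+1), 1 ≤ hgt B hg w →
      (repP B hg w).1 ∈ FS B (n+1) ∧ (repP B hg w).2 ∈ FS B (n+1) := by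
  intro w hw hw1
  obtain ⟨h1, h2, _, _⟩ := repP_spec B hg hw1
  have hle : hgt B hg w - 1 ≤ n + 1 := by
    have := hgt_le B hg hw; omega
  exact ⟨FS_mono hle h1, FS_mono hle h2⟩

include hg in
theorem ax3 (huncf : Uncf M) (hgenB : closure (↑B : Set M) = Set.univ)
    (hmin : ∀ Y : Finset M, closure (↑Y : Set M) = Set.univ → B.card ≤ Y.card) :
    ∀ b ∈ B, ∀ c ∈ B, b ≠ c → b * c ∉ B := by
  classical
  intro b hb c hc hbc hmem
  have hB1 : B ⊆ FS B 1 := FS_mono (Nat.zero_le 1)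
  refine bad_absurd B hg huncf hgenB hmin (X := FS B 1) hB1
    (FS_rep_closed B hg 0) {b, c, b * c} ?_ ?_
  · exact mem_blocks.2 ⟨b, hB1 hb, c, hB1 hc, hbc, hB1 hmem, rfl⟩
  · intro w hw hw1 heq
    have hwγ : w ∈ ({b, c, b*c} : Finset M) := by
      rw [heq]; exact (mem_psiB B hg).2 (Or.inr (Or.inr rfl))
    have hw0 : hgt B hg w = 0 := by
      simp only [Finset.mem_insert, Finset.mem_singleton] at hwγ
      rcases hwγ with rfl | rfl | rfl
      · exact hgt_eq_zero B hg hb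
      · exact hgt_eq_zero B hg hc
      · exact hgt_eq_zero B hg hmem
    omega

include hg in
theorem ax4 (huncf : Uncf M) (hgenB : closure (↑B : Set M) = Set.univ)
    (hmin : ∀ Y : Finset M, closure (↑Y : Set M) = Set.univ → B.card ≤ Y.card) :
    ∀ n, ∀ x ∈ FS B (n+1), x ∉ FS B n → ∀ y ∈ FS B (n+1), y ∉ FS B n → x ≠ y →
      x * y ∉ FS B (n+1) := by
  classical
  intro n x hx1 hx0 y hy1 hy0 hxy hz1
  have hgx : hgt B hg x = n + 1 := le_antisymm (hgt_le B hg hx1) (by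
    by_contra h
    push_neg at h
    exact hx0 (FS_mono (by omega) (mem_FS_hgt B hg x)))
  have hgy : hgt B hg y = n + 1 := le_antisymm (hgt_le B hg hy1) (by
    by_contra h
    push_neg at h
    exact hy0 (FS_mono (by omega) (mem_FS_hgt B hg y)))
  have hgz : hgt B hg (x*y) ≤ n + 1 := hgt_le B hg hz1
  refine bad_absurd B hg huncf hgenB hmin (FS_mono (Nat.zero_le (n+1)))
    (FS_rep_closed B hg n) {x, y, x*y} (mem_blocks.2 ⟨x, hx1, y, hy1, hxy, hz1, rfl⟩) ?_
  intro w hw hw1 heq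
  have hlt := hgt_repP_lt B hg hw1
  have hmemw : ∀ u, u ∈ ({x, y, x*y} : Finset M) → u ≠ w → hgt B hg u < hgt B hg w := by
    intro u hu hne
    have hu2 : u ∈ psiB B hg w := by rw [← heq]; exact hu
    rcases (mem_psiB B hg).1 hu2 with h | h | h
    · rw [h]; exact hlt.1
    · rw [h]; exact hlt.2
    · exact absurd h hne
  have hwγ : w ∈ ({x, y, x*y} : Finset M) := by
    rw [heq]; exact (mem_psiB B hg).2 (Or.inr (Or.inr rfl))
  simp only [Finset.mem_insert, Finset.mem_singleton] at hwγ
  rcases hwγ with rfl | rfl | rfl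
  · have h5 := hmemw y (by simp) hxy.symm
    omega
  · have h5 := hmemw x (by simp) hxy
    omega
  · have h5 := hmemw x (by simp) (mul_ne_left hxy).symm
    omega

include hg in
theorem ax5 (huncf : Uncf M) (hgenB : closure (↑B : Set M) = Set.univ)
    (hmin : ∀ Y : Finset M, closure (↑Y : Set M) = Set.univ → B.card ≤ Y.card) :
    ∀ n, ∀ z ∈ FS B (n+1), z ∉ FS B n → ∀ b ∈ FS B n, ∀ c ∈ FS B n, b ≠ c → z = b * c →
      ∀ b' ∈ FS B n, ∀ c' ∈ FS B n, b' ≠ c' → z = b' * c' →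
      ({b, c} : Set M) = {b', c'} := by
  classical
  intro n z hz1 hz0 b hb c hc hbc hzbc b' hb' c' hc' hbc' hzbc'
  by_contra hne
  have hgz : hgt B hg z = n + 1 := le_antisymm (hgt_le B hg hz1) (by
    by_contra h
    push_neg at h
    exact hz0 (FS_mono (by omega) (mem_FS_hgt B hg z)))
  obtain ⟨hp, hq, hpq, hzpq⟩ := repP_spec B hg (show 1 ≤ hgt B hg z by omega)
  have hmain : ∃ d e, d ∈ FS B n ∧ e ∈ FS B n ∧ d ≠ e ∧ z = d * e ∧
      ({d, e} : Set M) ≠ {(repP B hg z).1, (repP B hg z).2} := by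
    by_cases h1 : ({b, c} : Set M) = {(repP B hg z).1, (repP B hg z).2}
    · refine ⟨b', c', hb', hc', hbc', hzbc', fun h2 => hne (h1.trans h2.symm)⟩
    · exact ⟨b, c, hb, hc, hbc, hzbc, h1⟩
  obtain ⟨d, e, hd, he, hde, hzde, hdepq⟩ := hmain
  have hgd : hgt B hg d ≤ n := hgt_le B hg hd
  have hge : hgt B hg e ≤ n := hgt_le B hg he
  have hzd : z ≠ d := by
    intro h
    exact hde (eq_of_mul_eq_left (hzde.symm.trans h)).symm
  have hze : z ≠ e := by
    intro h
    exact hde (eq_of_mul_eq_right (hzde.symm.trans h))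
  refine bad_absurd B hg huncf hgenB hmin (FS_mono (Nat.zero_le (n+1)))
    (FS_rep_closed B hg n) {d, e, z} ?_ ?_
  · refine mem_blocks.2 ⟨d, FS_mono n.le_succ hd, e, FS_mono n.le_succ he, hde, ?_, ?_⟩
    · rw [← hzde]; exact hz1
    · rw [hzde]
  · intro w hw hw1 heq
    have hlt := hgt_repP_lt B hg hw1
    have hwγ : w ∈ ({d, e, z} : Finset M) := by
      rw [heq]; exact (mem_psiB B hg).2 (Or.inr (Or.inr rfl))
    simp only [Finset.mem_insert, Finset.mem_singleton] at hwγ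
    rcases hwγ with h0 | h0 | h0
    · -- w = d
      have hzin : z ∈ psiB B hg w := by rw [← heq]; simp
      have hgw : hgt B hg w ≤ n := by rw [h0]; exact hgd
      rcases (mem_psiB B hg).1 hzin with h | h | h
      · have h6 : hgt B hg z < hgt B hg w := by rw [h]; exact hlt.1
        omega
      · have h6 : hgt B hg z < hgt B hg w := by rw [h]; exact hlt.2
        omega
      · exact hzd (h.trans h0)
    · -- w = e
      have hzin : z ∈ psiB B hg w := by rw [← heq]; simp
      have hgw : hgt B hg w ≤ n := by rw [h0]; exact hge
      rcases (mem_psiB B hg).1 hzin with h | h | h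
      · have h6 : hgt B hg z < hgt B hg w := by rw [h]; exact hlt.1
        omega
      · have h6 : hgt B hg z < hgt B hg w := by rw [h]; exact hlt.2
        omega
      · exact hze (h.trans h0)
    · -- w = z
      have hdin : d ∈ psiB B hg w := by rw [← heq]; simp
      have hein : e ∈ psiB B hg w := by rw [← heq]; simp
      have hd' : d = (repP B hg w).1 ∨ d = (repP B hg w).2 := by
        rcases (mem_psiB B hg).1 hdin with h | h | h
        · exact Or.inl h
        · exact Or.inr h
        · exact absurd (h.trans h0).symm hzd
      have he' : e = (repP B hg w).1 ∨ e = (repP B hg w).2 := by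
        rcases (mem_psiB B hg).1 hein with h | h | h
        · exact Or.inl h
        · exact Or.inr h
        · exact absurd (h.trans h0).symm hze
      rw [h0] at hd' he'
      apply hdepq
      rcases hd' with h1 | h1 <;> rcases he' with h2 | h2
      · exact absurd (h1.trans h2.symm) hde
      · rw [h1, h2]
      · rw [h1, h2]; exact Set.pair_comm _ _
      · exact absurd (h1.trans h2.symm) hde

end Heights

theorem FS_zero (B : Finset M) : FS B 0 = B := rfl

section Hom
variable (B : Finset M) (hg : ∀ x : M, ∃ n, x ∈ FS B n)
variable {N : Type} [Steiner N]

theorem mull {a b : N} : (a * b) * a = b := by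
  rw [Steiner.comm (a*b) a, Steiner.lcancel]

open Classical in
noncomputable def val (f : {x : M // x ∈ (↑B : Set M)} → N) (e : N) : ℕ → M → N
  | 0, x => if hx : x ∈ B then f ⟨x, Finset.mem_coe.2 hx⟩ else e
  | n+1, x =>
      if x ∈ FS B n then val f e n x
      else if hr : ∃ p, p ∈ FS B n ∧ ∃ q, q ∈ FS B n ∧ p ≠ q ∧ x = p * q
        then val f e n hr.choose * val f e n hr.choose_spec.2.choose
        else e

noncomputable def GG (f : {x : M // x ∈ (↑B : Set M)} → N) (e : N) : M → N :=
  fun x => val B f e (hgt B hg x) x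

variable (f : {x : M // x ∈ (↑B : Set M)} → N) (e : N)

theorem val_succ_mem {x : M} {n : ℕ} (hx : x ∈ FS B n) :
    val B f e (n+1) x = val B f e n x := by
  simp only [val]
  rw [if_pos hx]

theorem val_stable {x : M} {n : ℕ} (hx : x ∈ FS B n) :
    ∀ k, val B f e (n+k) x = val B f e n x := by
  intro k
  induction k with
  | zero => rfl
  | succ k ih =>
    have : n + (k+1) = (n+k) + 1 := rfl
    rw [this, val_succ_mem B f e (FS_mono (Nat.le_add_right n k) hx), ih]

theorem val_eq_G {x : M} {n : ℕ} (hx : x ∈ FS B n) :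
    val B f e n x = GG B hg f e x := by
  obtain ⟨k, hk⟩ := Nat.exists_eq_add_of_le (hgt_le B hg hx)
  rw [hk, val_stable B f e (mem_FS_hgt B hg x) k]
  rfl

open Classical in
theorem val_new {x : M} {n : ℕ} (hn : x ∉ FS B n)
    (hr : ∃ p, p ∈ FS B n ∧ ∃ q, q ∈ FS B n ∧ p ≠ q ∧ x = p * q) :
    val B f e (n+1) x = val B f e n hr.choose * val B f e n hr.choose_spec.2.choose := by
  simp only [val]
  rw [if_neg hn, dif_pos hr]

theorem G_base {a : M} (ha : a ∈ B) : GG B hg f e a = f ⟨a, Finset.mem_coe.2 ha⟩ := by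
  have h0 : hgt B hg a = 0 := hgt_eq_zero B hg ha
  show val B f e (hgt B hg a) a = _
  rw [h0]
  simp only [val]
  rw [dif_pos ha]

theorem hgt_eq_succ {x : M} {n : ℕ} (hx1 : x ∈ FS B (n+1)) (hx0 : x ∉ FS B n) :
    hgt B hg x = n + 1 := by
  refine le_antisymm (hgt_le B hg hx1) ?_
  by_contra h
  push_neg at h
  exact hx0 (FS_mono (by omega) (mem_FS_hgt B hg x))

theorem G_mul_new
    (hax5 : ∀ n, ∀ z ∈ FS B (n+1), z ∉ FS B n → ∀ b ∈ FS B n, ∀ c ∈ FS B n, b ≠ c →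
      z = b * c → ∀ b' ∈ FS B n, ∀ c' ∈ FS B n, b' ≠ c' → z = b' * c' →
      ({b, c} : Set M) = {b', c'})
    {x y : M} (hxy : x ≠ y) {n : ℕ}
    (hx : x ∈ FS B n) (hy : y ∈ FS B n) (hzn : x * y ∉ FS B n) :
    GG B hg f e (x * y) = GG B hg f e x * GG B hg f e y := by
  classical
  have hz1 : x * y ∈ FS B (n+1) := mem_FS_succ.2 ⟨x, hx, y, hy, rfl⟩
  have hgz : hgt B hg (x*y) = n + 1 := hgt_eq_succ B hg hz1 hzn
  have hr : ∃ p, p ∈ FS B n ∧ ∃ q, q ∈ FS B n ∧ p ≠ q ∧ x * y = p * q :=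
    ⟨x, hx, y, hy, hxy, rfl⟩
  have hGz : GG B hg f e (x*y) = val B f e n hr.choose * val B f e n hr.choose_spec.2.choose := by
    show val B f e (hgt B hg (x*y)) (x*y) = _
    rw [hgz]
    exact val_new B f e hzn hr
  have hp := hr.choose_spec.1
  have hq := hr.choose_spec.2.choose_spec.1
  have hne := hr.choose_spec.2.choose_spec.2.1
  have heq := hr.choose_spec.2.choose_spec.2.2
  have hpair := hax5 n (x*y) hz1 hzn hr.choose hp hr.choose_spec.2.choose hq hne heq
    x hx y hy hxy rfl
  rcases pair_cases hpair hne with ⟨h1, h2⟩ | ⟨h1, h2⟩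
  · rw [hGz, val_eq_G B hg f e hp, val_eq_G B hg f e hq]
    exact congrArg₂ (fun a b => GG B hg f e a * GG B hg f e b) h1 h2
  · rw [hGz, val_eq_G B hg f e hp, val_eq_G B hg f e hq]
    exact (congrArg₂ (fun a b => GG B hg f e a * GG B hg f e b) h1 h2).trans
      (Steiner.comm _ _)

theorem G_mul_high
    (hax4 : ∀ n, ∀ x ∈ FS B (n+1), x ∉ FS B n → ∀ y ∈ FS B (n+1), y ∉ FS B n → x ≠ y →
      x * y ∉ FS B (n+1))
    (hax5 : ∀ n, ∀ z ∈ FS B (n+1), z ∉ FS B n → ∀ b ∈ FS B n, ∀ c ∈ FS B n, b ≠ c →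
      z = b * c → ∀ b' ∈ FS B n, ∀ c' ∈ FS B n, b' ≠ c' → z = b' * c' →
      ({b, c} : Set M) = {b', c'})
    (k : ℕ) (x y : M) (hx1 : x ∈ FS B (k+1)) (hx0 : x ∉ FS B k)
    (hy1 : y ∈ FS B (k+1)) (hxy : x ≠ y) (hz1 : x * y ∈ FS B (k+1)) :
    GG B hg f e (x * y) = GG B hg f e x * GG B hg f e y := by
  classical
  have hyk : y ∈ FS B k := by
    by_contra h
    exact hax4 k x hx1 hx0 y hy1 h hxy hz1
  have hxz : x ≠ x * y := (mul_ne_left hxy).symm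
  have hzk : x * y ∈ FS B k := by
    by_contra h
    have h2 := hax4 k x hx1 hx0 (x*y) hz1 h hxz
    rw [Steiner.lcancel] at h2
    exact h2 hy1
  have hxeq : y * (x * y) = x := by
    rw [Steiner.comm x y, Steiner.lcancel]
  have hyz : y ≠ x * y := (mul_ne_right hxy).symm
  have hgx : hgt B hg x = k + 1 := hgt_eq_succ B hg hx1 hx0
  have hr : ∃ p, p ∈ FS B k ∧ ∃ q, q ∈ FS B k ∧ p ≠ q ∧ x = p * q :=
    ⟨y, hyk, x*y, hzk, hyz, hxeq.symm⟩
  have hGx : GG B hg f e x = val B f e k hr.choose * val B f e k hr.choose_spec.2.choose := by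
    show val B f e (hgt B hg x) x = _
    rw [hgx]
    exact val_new B f e hx0 hr
  have hp := hr.choose_spec.1
  have hq := hr.choose_spec.2.choose_spec.1
  have hne := hr.choose_spec.2.choose_spec.2.1
  have heq := hr.choose_spec.2.choose_spec.2.2
  have hpair := hax5 k x hx1 hx0 hr.choose hp hr.choose_spec.2.choose hq hne heq
    y hyk (x*y) hzk hyz hxeq.symm
  rw [val_eq_G B hg f e hp, val_eq_G B hg f e hq] at hGx
  rcases pair_cases hpair hne with ⟨h1, h2⟩ | ⟨h1, h2⟩
  · have hc : GG B hg f e hr.choose * GG B hg f e hr.choose_spec.2.choose =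
        GG B hg f e y * GG B hg f e (x * y) :=
      congrArg₂ (fun a b => GG B hg f e a * GG B hg f e b) h1 h2
    rw [hc] at hGx
    rw [hGx, mull]
  · have hc : GG B hg f e hr.choose * GG B hg f e hr.choose_spec.2.choose =
        GG B hg f e (x * y) * GG B hg f e y :=
      congrArg₂ (fun a b => GG B hg f e a * GG B hg f e b) h1 h2
    rw [hc] at hGx
    rw [hGx, mulr]

theorem G_hom_le
    (hax3 : ∀ b ∈ B, ∀ c ∈ B, b ≠ c → b * c ∉ B)
    (hax4 : ∀ n, ∀ x ∈ FS B (n+1), x ∉ FS B n → ∀ y ∈ FS B (n+1), y ∉ FS B n → x ≠ y →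
      x * y ∉ FS B (n+1))
    (hax5 : ∀ n, ∀ z ∈ FS B (n+1), z ∉ FS B n → ∀ b ∈ FS B n, ∀ c ∈ FS B n, b ≠ c →
      z = b * c → ∀ b' ∈ FS B n, ∀ c' ∈ FS B n, b' ≠ c' → z = b' * c' →
      ({b, c} : Set M) = {b', c'})
    {x y : M} (hxy : x ≠ y) (hle : hgt B hg y ≤ hgt B hg x) :
    GG B hg f e (x * y) = GG B hg f e x * GG B hg f e y := by
  classical
  have hx : x ∈ FS B (hgt B hg x) := mem_FS_hgt B hg x
  have hy : y ∈ FS B (hgt B hg x) := FS_mono hle (mem_FS_hgt B hg y)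
  by_cases hzn : x * y ∈ FS B (hgt B hg x)
  · cases hcx : hgt B hg x with
    | zero =>
      rw [hcx] at hx hy hzn
      rw [FS_zero] at hx hy hzn
      exact absurd hzn (hax3 x hx y hy hxy)
    | succ k =>
      rw [hcx] at hx hy hzn
      exact G_mul_high B hg f e hax4 hax5 k x y hx
        (notMem_FS_lt B hg (by omega)) hy hxy hzn
  · exact G_mul_new B hg f e hax5 hxy hx hy hzn

theorem G_hom
    (hax3 : ∀ b ∈ B, ∀ c ∈ B, b ≠ c → b * c ∉ B)
    (hax4 : ∀ n, ∀ x ∈ FS B (n+1), x ∉ FS B n → ∀ y ∈ FS B (n+1), y ∉ FS B n → x ≠ y →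
      x * y ∉ FS B (n+1))
    (hax5 : ∀ n, ∀ z ∈ FS B (n+1), z ∉ FS B n → ∀ b ∈ FS B n, ∀ c ∈ FS B n, b ≠ c →
      z = b * c → ∀ b' ∈ FS B n, ∀ c' ∈ FS B n, b' ≠ c' → z = b' * c' →
      ({b, c} : Set M) = {b', c'})
    (x y : M) :
    GG B hg f e (x * y) = GG B hg f e x * GG B hg f e y := by
  rcases eq_or_ne x y with rfl | hxy
  · rw [Steiner.idem]
    exact (Steiner.idem _).symm
  rcases le_total (hgt B hg y) (hgt B hg x) with hle | hle
  · exact G_hom_le B hg f e hax3 hax4 hax5 hxy hle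
  · have h2 := G_hom_le B hg f e hax3 hax4 hax5 hxy.symm hle
    rw [Steiner.comm x y, h2]
    exact Steiner.comm _ _

end Hom

end SA

open Steiner
/-- Every finitely generated unconfined Steiner quasigroup is free. -/
theorem stmt11 {M : Type} [Steiner M] (A : Finset M)
    (hgen : closure (↑A : Set M) = Set.univ)
    (huncf : ∀ A' : Finset M, A'.Nonempty → ∃ a ∈ A',
      ∀ b c b' c' : M, b ∈ A' → c ∈ A' → b' ∈ A' → c' ∈ A' →
        b ≠ c → a = b * c → b' ≠ c' → a = b' * c' →
        ({b, c} : Set M) = {b', c'}) :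
    ∃ B : Set M, FreeBase B := by
  classical
  rcases isEmpty_or_nonempty M with hM | hM
  · refine ⟨∅, ?_, ?_⟩
    · ext x; exact isEmptyElim x
    · intro N _ f
      refine ⟨⟨fun x => isEmptyElim x, fun x => isEmptyElim x⟩, fun a => isEmptyElim (a.1 : M)⟩
  · have hP : ∃ k, ∃ C : Finset M, C.card = k ∧ closure (↑C : Set M) = Set.univ :=
      ⟨A.card, A, rfl, hgen⟩
    obtain ⟨Bc, hBcard, hBgen⟩ := Nat.find_spec hP
    have hmin : ∀ Y : Finset M, closure (↑Y : Set M) = Set.univ → Bc.card ≤ Y.card := by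
      intro Y hY
      rw [hBcard]
      exact Nat.find_le ⟨Y, rfl, hY⟩
    have hg : ∀ x : M, ∃ n, x ∈ SA.FS Bc n := SA.exists_FS hBgen
    have hBne : Bc.Nonempty := by
      rcases Finset.eq_empty_or_nonempty Bc with rfl | h
      · obtain ⟨n, hn⟩ := hg hM.some
        rw [SA.FS_empty] at hn
        exact absurd hn (Finset.notMem_empty _)
      · exact h
    have huncf' : SA.Uncf M := huncf
    have hax3 := SA.ax3 Bc hg huncf' hBgen hmin
    have hax4 := SA.ax4 Bc hg huncf' hBgen hmin
    have hax5 := SA.ax5 Bc hg huncf' hBgen hmin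
    refine ⟨(↑Bc : Set M), hBgen, ?_⟩
    intro N instN f
    set e : N := f ⟨hBne.choose, Finset.mem_coe.2 hBne.choose_spec⟩ with he
    refine ⟨⟨SA.GG Bc hg f e, fun x y => SA.G_hom Bc hg f e hax3 hax4 hax5 x y⟩, ?_⟩
    intro a
    have ha : a.1 ∈ Bc := Finset.mem_coe.1 a.2
    show SA.GG Bc hg f e a.1 = f a
    rw [SA.G_base Bc hg f e ha]
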